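/- dt_k(x_1···x_k ⊕ x_{k+1}···x_{2k}) = 2·P·(1 − P), where P = ∏_{i=1}^k (1 − 1/2^i), for the Boolean function on F_2^n (n ≥ 2k) that is the sum of two monomials of degree k on disjoint variable sets. -/

import Mathlib

open Finset

def testSum (n k : ℕ) (f : (Fin n → ZMod 2) → ZMod 2)
    (u0 : Fin n → ZMod 2) (u : Fin k → Fin n → ZMod 2) : ZMod 2 :=
  ∑ c : Fin k → ZMod 2, f (u0 + ∑ i, c i • u i)

noncomputable def dt (n k : ℕ) (f : (Fin n → ZMod 2) → ZMod 2) : ℝ :=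
  ((univ.filter (fun p : (Fin n → ZMod 2) × (Fin k → Fin n → ZMod 2) =>
      testSum n k f p.1 p.2 ≠ 0)).card : ℝ) / 2 ^ ((k + 1) * n)

def anf (n : ℕ) (f : (Fin n → ZMod 2) → ZMod 2) (a : Fin n → ZMod 2) : ZMod 2 :=
  ∑ x ∈ univ.filter (fun x : Fin n → ZMod 2 => ∀ i, (x i).val ≤ (a i).val), f x

def wt (n : ℕ) (a : Fin n → ZMod 2) : ℕ := (univ.filter fun i => a i = 1).card

def degree (n : ℕ) (f : (Fin n → ZMod 2) → ZMod 2) : ℕ :=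
  (univ.filter fun a => anf n f a ≠ 0).sup (wt n)

def monom (n : ℕ) (a : Fin n → ZMod 2) (x : Fin n → ZMod 2) : ZMod 2 :=
  ∏ i ∈ univ.filter (fun i => a i = 1), x i

/- ### Auxiliary lemmas -/

section Aux

open Matrix

lemma zmod2_add_self : ∀ x : ZMod 2, x + x = 0 := by decide

lemma zmod2_ne_one : ∀ x : ZMod 2, x ≠ 1 → x = 0 := by decide

lemma zmod2_vec_add_self {α : Type*} (x : α → ZMod 2) : x + x = 0 := by
  funext a; exact zmod2_add_self (x a)

/-- The k-th order derivative test sum of a degree-k monomial equals the indicator of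
the direction matrix being invertible. -/
lemma sum_prod_affine (k : ℕ) (w : Fin k → ZMod 2) (v : Fin k → Fin k → ZMod 2) :
    ∑ c : Fin k → ZMod 2, ∏ j, (w j + ∑ i, c i * v i j)
      = if (Matrix.of v).det = 0 then 0 else 1 := by
  set M : Matrix (Fin k) (Fin k) (ZMod 2) := (Matrix.of v)ᵀ with hM
  have hrw : ∀ (c : Fin k → ZMod 2) (j : Fin k), w j + ∑ i, c i * v i j = (w + M.mulVec c) j := by
    intro c j
    simp [M, Matrix.mulVec, dotProduct, mul_comm]
  by_cases hdet : (Matrix.of v).det = 0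
  · rw [if_pos hdet]
    have hdetM : M.det = 0 := by rw [hM, Matrix.det_transpose]; exact hdet
    obtain ⟨c0, hc0, hMc0⟩ := (Matrix.exists_mulVec_eq_zero_iff).2 hdetM
    apply Finset.sum_involution (fun c _ => c + c0)
    · intro c _
      have : w + M.mulVec (c + c0) = w + M.mulVec c := by
        rw [Matrix.mulVec_add, hMc0, add_zero]
      simp only [hrw, this]
      exact zmod2_add_self _
    · intro c _ _
      simp [hc0]
    · intro c _; exact Finset.mem_univ _
    · intro c _
      rw [add_assoc, zmod2_vec_add_self, add_zero]
  · rw [if_neg hdet]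
    have hdetM : IsUnit M.det := by
      rw [hM, Matrix.det_transpose]
      exact isUnit_iff_ne_zero.2 hdet
    have hbij : Function.Bijective (fun c => w + M.mulVec c) := by
      have hinj : Function.Injective (fun c : Fin k → ZMod 2 => w + M.mulVec c) := by
        intro a b hab
        exact (Matrix.mulVec_injective_iff_isUnit.2 ((Matrix.isUnit_iff_isUnit_det M).2 hdetM))
          (by simpa using hab)
      exact Finite.injective_iff_bijective.1 hinj
    calc ∑ c : Fin k → ZMod 2, ∏ j, (w j + ∑ i, c i * v i j)
        = ∑ c : Fin k → ZMod 2, ∏ j, (w + M.mulVec c) j := by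
          refine Finset.sum_congr rfl fun c _ => ?_
          refine Finset.prod_congr rfl fun j _ => hrw c j
      _ = ∑ y : Fin k → ZMod 2, ∏ j, y j := hbij.sum_comp _
      _ = 1 := by
          rw [Finset.sum_eq_single (fun _ => (1 : ZMod 2))]
          · simp
          · intro y _ hy
            have : ∃ j, y j ≠ 1 := by
              by_contra hcon
              push_neg at hcon
              exact hy (funext hcon)
            obtain ⟨j, hj⟩ := this
            exact Finset.prod_eq_zero (Finset.mem_univ j) (zmod2_ne_one _ hj)
          · intro habs
            exact absurd (Finset.mem_univ _) habs

variable {A B : Type*} [Fintype A] [Fintype B] [DecidableEq B]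
  [AddCommGroup A] [AddCommGroup B]

lemma fiber_card_eq (φ : A →+ B) (hφ : Function.Surjective φ) (b b' : B) :
    (univ.filter fun a => φ a = b).card = (univ.filter fun a => φ a = b').card := by
  obtain ⟨a0, ha0⟩ := hφ b
  obtain ⟨a1, ha1⟩ := hφ b'
  apply Finset.card_bij' (fun a _ => a + (a1 - a0)) (fun a _ => a + (a0 - a1))
  · intro a ha
    simp only [Finset.mem_filter, Finset.mem_univ, true_and] at ha ⊢
    simp [map_add, map_sub, ha, ha0, ha1]
  · intro a ha
    simp only [Finset.mem_filter, Finset.mem_univ, true_and] at ha ⊢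
    simp [map_add, map_sub, ha, ha0, ha1]
  · intro a _; abel
  · intro a _; abel

lemma card_filter_comp (φ : A →+ B) (hφ : Function.Surjective φ) (P : B → Prop)
    [DecidablePred P] :
    (univ.filter fun a => P (φ a)).card * Fintype.card B
      = (univ.filter P).card * Fintype.card A := by
  set c := (univ.filter fun a => φ a = 0).card with hc
  have hfib : ∀ b : B, (univ.filter fun a => φ a = b).card = c :=
    fun b => fiber_card_eq φ hφ b 0
  have hA : Fintype.card A = Fintype.card B * c := by
    rw [← Finset.card_univ, Finset.card_eq_sum_card_fiberwise
      (f := φ) (t := univ) (fun a _ => Finset.mem_univ _)]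
    rw [Finset.sum_congr rfl (fun b _ => hfib b)]
    simp [mul_comm]
  have hP : (univ.filter fun a => P (φ a)).card = (univ.filter P).card * c := by
    rw [Finset.card_eq_sum_card_fiberwise (f := φ) (t := univ.filter P) (s := univ.filter fun a => P (φ a))
      (fun a ha => by simp only [Finset.mem_coe, Finset.mem_filter, Finset.mem_univ, true_and] at ha ⊢; exact ha)]
    rw [Finset.sum_congr rfl (fun b hb => ?_), Finset.sum_const, smul_eq_mul]
    simp only [Finset.mem_filter, Finset.mem_univ, true_and] at hb
    rw [Finset.filter_filter, ← hfib b]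
    congr 1
    ext a
    simp only [Finset.mem_filter, Finset.mem_univ, true_and]
    constructor
    · rintro ⟨_, h2⟩; exact h2
    · intro h2; exact ⟨by rwa [h2], h2⟩
  rw [hP, hA]; ring

abbrev Mat (k : ℕ) := Matrix (Fin k) (Fin k) (ZMod 2)

noncomputable def glEquiv (k : ℕ) :
    {M : Mat k // M.det ≠ 0} ≃ GL (Fin k) (ZMod 2) where
  toFun M := Matrix.GeneralLinearGroup.mk'' M.1 (isUnit_iff_ne_zero.2 M.2)
  invFun g := ⟨(g : Mat k), by
    have : IsUnit (g : Mat k).det := (Matrix.isUnit_iff_isUnit_det _).1 ⟨g, rfl⟩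
    exact isUnit_iff_ne_zero.1 this⟩
  left_inv M := rfl
  right_inv g := Units.ext rfl

lemma card_det_ne_zero (k : ℕ) :
    ((univ.filter fun M : Mat k => M.det ≠ 0).card : ℕ)
      = ∏ i : Fin k, (2 ^ k - 2 ^ (i : ℕ)) := by
  rw [← Fintype.card_subtype]
  rw [Fintype.card_congr (glEquiv k)]
  have := Matrix.card_GL_field (𝔽 := ZMod 2) k
  rw [Nat.card_eq_fintype_card] at this
  simpa using this

lemma card_mat (k : ℕ) : Fintype.card (Mat k) = 2 ^ (k * k) := by
  have : Fintype.card (Mat k)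
      = Fintype.card (Fin k → Fin k → ZMod 2) := Fintype.card_congr (Equiv.refl _)
  rw [this]
  simp [Fintype.card_fun]
  rw [← pow_mul]

lemma card_pair (k : ℕ) :
    (univ.filter fun p : Mat k × Mat k => ¬(p.1.det = 0 ↔ p.2.det = 0)).card
      = 2 * (univ.filter fun M : Mat k => M.det ≠ 0).card
          * (univ.filter fun M : Mat k => M.det = 0).card := by
  set G := (univ.filter fun M : Mat k => M.det ≠ 0).card with hG
  set D := (univ.filter fun M : Mat k => M.det = 0).card with hD
  rw [Finset.card_filter]
  rw [Fintype.sum_prod_type]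
  have hinner : ∀ M : Mat k,
      (∑ N : Mat k, if ¬(M.det = 0 ↔ N.det = 0) then 1 else 0)
        = if M.det = 0 then G else D := by
    intro M
    by_cases hM : M.det = 0
    · rw [if_pos hM, hG, Finset.card_filter]
      apply Finset.sum_congr rfl
      intro N _
      congr 1
      simp [hM]
    · rw [if_neg hM, hD, Finset.card_filter]
      apply Finset.sum_congr rfl
      intro N _
      congr 1
      simp [hM]
  rw [Finset.sum_congr rfl (fun M _ => hinner M)]
  rw [Finset.sum_ite, Finset.sum_const, Finset.sum_const]
  simp only [smul_eq_mul]
  have h1 : (univ.filter fun M : Mat k => M.det = 0).card = D := hD.symm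
  have h2 : (univ.filter fun M : Mat k => ¬(M.det = 0)).card = G := by rw [hG]
  rw [h1, h2]
  ring

def phi (n k : ℕ) (hkk : k + k ≤ n) : (Fin k → Fin n → ZMod 2) →+ Mat k × Mat k where
  toFun u := (Matrix.of fun i j => u i ((Fin.castAdd k j).castLE hkk),
              Matrix.of fun i j => u i ((Fin.natAdd k j).castLE hkk))
  map_zero' := by ext <;> rfl
  map_add' _ _ := by ext <;> rfl

lemma phi_surj (n k : ℕ) (hkk : k + k ≤ n) : Function.Surjective (phi n k hkk) := by
  rintro ⟨M, N⟩
  refine ⟨fun i x => if h : (x : ℕ) < k then M i ⟨x, h⟩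
    else if h2 : (x : ℕ) - k < k then N i ⟨(x : ℕ) - k, h2⟩ else 0, ?_⟩
  refine Prod.ext ?_ ?_
  · ext i j
    have hval : (((Fin.castAdd k j).castLE hkk : Fin n) : ℕ) = (j : ℕ) := rfl
    simp only [phi, AddMonoidHom.coe_mk, ZeroHom.coe_mk, Matrix.of_apply, hval]
    rw [dif_pos j.isLt]
  · ext i j
    have hval : (((Fin.natAdd k j).castLE hkk : Fin n) : ℕ) = k + (j : ℕ) := rfl
    simp only [phi, AddMonoidHom.coe_mk, ZeroHom.coe_mk, Matrix.of_apply, hval]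
    rw [dif_neg (by omega), dif_pos (by omega : k + (j : ℕ) - k < k)]
    congr 1
    ext
    simp

lemma testSum_eq (n k : ℕ) (hkk : k + k ≤ n) (u0 : Fin n → ZMod 2)
    (u : Fin k → Fin n → ZMod 2) :
    testSum n k (fun x =>
        (∏ j : Fin k, x ((Fin.castAdd k j).castLE hkk)) +
        ∏ j : Fin k, x ((Fin.natAdd k j).castLE hkk)) u0 u
      = (if ((phi n k hkk) u).1.det = 0 then 0 else 1)
        + (if ((phi n k hkk) u).2.det = 0 then 0 else 1) := by
  unfold testSum
  rw [Finset.sum_add_distrib]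
  have key : ∀ e : Fin k → Fin n,
      (∑ c : Fin k → ZMod 2, ∏ j, (u0 + ∑ i, c i • u i) (e j))
        = if (Matrix.of fun i j => u i (e j)).det = 0 then 0 else 1 := by
    intro e
    rw [← sum_prod_affine k (fun j => u0 (e j)) (fun i j => u i (e j))]
    refine Finset.sum_congr rfl fun c _ => Finset.prod_congr rfl fun j _ => ?_
    simp [Finset.sum_apply]
  rw [key, key]
  rfl

lemma ite_add_ne_zero (a b : Prop) [Decidable a] [Decidable b] :
    ((if a then (0 : ZMod 2) else 1) + (if b then 0 else 1) ≠ 0) ↔ ¬(a ↔ b) := by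
  by_cases ha : a <;> by_cases hb : b <;> simp [ha, hb] <;> decide

lemma prod_ratio (k : ℕ) :
    ((∏ i : Fin k, (2 ^ k - 2 ^ (i : ℕ) : ℕ)) : ℝ) / 2 ^ (k * k)
      = ∏ i ∈ Icc 1 k, (1 - 1 / 2 ^ i : ℝ) := by
  have h1 : ((∏ i : Fin k, (2 ^ k - 2 ^ (i : ℕ) : ℕ)) : ℝ)
      = ∏ i : Fin k, ((2 : ℝ) ^ k - 2 ^ (i : ℕ)) := by
    refine Finset.prod_congr rfl fun i _ => ?_
    have hle : (2 : ℕ) ^ (i : ℕ) ≤ 2 ^ k := Nat.pow_le_pow_right (by norm_num) i.isLt.le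
    push_cast [Nat.cast_sub hle]
    ring
  have h2 : ((2 : ℝ)) ^ (k * k) = ∏ _i : Fin k, (2 : ℝ) ^ k := by
    rw [Finset.prod_const, Finset.card_univ, Fintype.card_fin, ← pow_mul]
  rw [h1, h2, ← Finset.prod_div_distrib]
  have h3 : ∀ i : Fin k, ((2 : ℝ) ^ k - 2 ^ (i : ℕ)) / 2 ^ k = 1 - 1 / 2 ^ (k - (i : ℕ)) := by
    intro i
    have hsplit : (2 : ℝ) ^ k = 2 ^ (k - (i : ℕ)) * 2 ^ (i : ℕ) := by
      rw [← pow_add]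
      congr 1
      omega
    rw [hsplit]
    have h2i : (2 : ℝ) ^ (i : ℕ) ≠ 0 := by positivity
    have h2ki : (2 : ℝ) ^ (k - (i : ℕ)) ≠ 0 := by positivity
    field_simp
  rw [Finset.prod_congr rfl fun i _ => h3 i]
  rw [Fin.prod_univ_eq_prod_range (fun i => (1 : ℝ) - 1 / 2 ^ (k - i)) k]
  refine Finset.prod_nbij' (fun i => k - i) (fun i => k - i) ?_ ?_ ?_ ?_ ?_
  · intro a ha
    simp only [Finset.mem_range] at ha
    simp only [Finset.mem_Icc]
    omega
  · intro a ha
    simp only [Finset.mem_Icc] at ha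
    simp only [Finset.mem_range]
    omega
  · intro a ha
    simp only [Finset.mem_range] at ha
    show k - (k - a) = a
    omega
  · intro a ha
    simp only [Finset.mem_Icc] at ha
    show k - (k - a) = a
    omega
  · intro a ha
    simp only [Finset.mem_range] at ha
    show (1 : ℝ) - 1 / 2 ^ (k - a) = 1 - 1 / 2 ^ (k - a)
    rfl

end Aux

theorem dt_two_monomials (n k : ℕ) (hk : 1 ≤ k) (h : 2 * k ≤ n) :
    dt n k (fun x =>
        (∏ j : Fin k, x ((Fin.castAdd k j).castLE (by omega : k + k ≤ n))) +
        ∏ j : Fin k, x ((Fin.natAdd k j).castLE (by omega : k + k ≤ n)))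
      = 2 * (∏ i ∈ Icc 1 k, (1 - 1 / 2 ^ i : ℝ)) *
          (1 - ∏ i ∈ Icc 1 k, (1 - 1 / 2 ^ i : ℝ)) := by
  classical
  have hkk : k + k ≤ n := by omega
  set G := (univ.filter fun M : Mat k => M.det ≠ 0).card with hGdef
  set D := (univ.filter fun M : Mat k => M.det = 0).card with hDdef
  set P : Mat k × Mat k → Prop := fun q => ¬(q.1.det = 0 ↔ q.2.det = 0) with hPdef
  -- rewrite the condition
  have hcond : ∀ p : (Fin n → ZMod 2) × (Fin k → Fin n → ZMod 2),
      (testSum n k (fun x =>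
        (∏ j : Fin k, x ((Fin.castAdd k j).castLE (by omega : k + k ≤ n))) +
        ∏ j : Fin k, x ((Fin.natAdd k j).castLE (by omega : k + k ≤ n))) p.1 p.2 ≠ 0)
        ↔ P ((phi n k hkk) p.2) := by
    intro p
    have h1 : testSum n k (fun x =>
        (∏ j : Fin k, x ((Fin.castAdd k j).castLE (by omega : k + k ≤ n))) +
        ∏ j : Fin k, x ((Fin.natAdd k j).castLE (by omega : k + k ≤ n))) p.1 p.2
      = (if ((phi n k hkk) p.2).1.det = 0 then 0 else 1)
        + (if ((phi n k hkk) p.2).2.det = 0 then 0 else 1) := testSum_eq n k hkk p.1 p.2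
    rw [h1]
    exact ite_add_ne_zero _ _
  unfold dt
  have hfilter : (univ.filter (fun p : (Fin n → ZMod 2) × (Fin k → Fin n → ZMod 2) =>
      testSum n k (fun x =>
        (∏ j : Fin k, x ((Fin.castAdd k j).castLE (by omega : k + k ≤ n))) +
        ∏ j : Fin k, x ((Fin.natAdd k j).castLE (by omega : k + k ≤ n))) p.1 p.2 ≠ 0))
      = univ ×ˢ (univ.filter fun u => P ((phi n k hkk) u)) := by
    ext p
    simp only [Finset.mem_filter, Finset.mem_product, Finset.mem_univ, true_and]
    exact hcond p
  rw [hfilter, Finset.card_product, Finset.card_univ]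
  set Nu := (univ.filter fun u => P ((phi n k hkk) u)).card with hNudef
  -- counting facts
  have hstep : Nu * Fintype.card (Mat k × Mat k)
      = (univ.filter P).card * Fintype.card (Fin k → Fin n → ZMod 2) :=
    card_filter_comp (phi n k hkk) (phi_surj n k hkk) P
  have hcardB : Fintype.card (Mat k × Mat k) = 2 ^ (k * k) * 2 ^ (k * k) := by
    rw [Fintype.card_prod, card_mat]
  have hcardA : Fintype.card (Fin k → Fin n → ZMod 2) = 2 ^ (n * k) := by
    have : Fintype.card (Fin k → Fin n → ZMod 2)
        = (Fintype.card (Fin n → ZMod 2)) ^ k := by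
      simp [Fintype.card_fun]
    rw [this]
    simp [Fintype.card_fun]
    rw [← pow_mul]
  have hcardU : Fintype.card (Fin n → ZMod 2) = 2 ^ n := by
    simp [Fintype.card_fun]
  have hpairP : (univ.filter P).card = 2 * G * D := card_pair k
  have hGD : D + G = 2 ^ (k * k) := by
    have := Finset.card_filter_add_card_filter_not
      (s := (univ : Finset (Mat k))) (p := fun M : Mat k => M.det = 0)
    rw [Finset.card_univ, card_mat] at this
    convert this using 2
  have hGval : G = ∏ i : Fin k, (2 ^ k - 2 ^ (i : ℕ)) := card_det_ne_zero k
  -- real arithmetic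
  have hstepR : (Nu : ℝ) * (2 ^ (k * k) * 2 ^ (k * k)) = (2 * G * D) * 2 ^ (n * k) := by
    have := hstep
    rw [hcardB, hcardA, hpairP] at this
    exact_mod_cast congrArg (Nat.cast : ℕ → ℝ) this
  have hDR : (D : ℝ) = 2 ^ (k * k) - G := by
    have : (D : ℝ) + G = 2 ^ (k * k) := by exact_mod_cast hGD
    linarith
  set Pk : ℝ := ∏ i ∈ Icc 1 k, (1 - 1 / 2 ^ i : ℝ) with hPkdef
  have hPv : (G : ℝ) / 2 ^ (k * k) = Pk := by
    rw [hGval, hPkdef]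
    exact_mod_cast prod_ratio k
  have hNuR : (Nu : ℝ) = 2 * Pk * (1 - Pk) * 2 ^ (n * k) := by
    have h2kk : ((2 : ℝ) ^ (k * k)) ≠ 0 := by positivity
    have hG2 : (G : ℝ) = Pk * 2 ^ (k * k) := by
      field_simp at hPv
      linarith [hPv]
    have : (Nu : ℝ) * (2 ^ (k * k) * 2 ^ (k * k))
        = (2 * Pk * (1 - Pk) * 2 ^ (n * k)) * (2 ^ (k * k) * 2 ^ (k * k)) := by
      rw [hstepR, hDR, hG2]
      ring
    exact mul_right_cancel₀ (by positivity) this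
  rw [hcardU]
  push_cast
  rw [hNuR]
  have hpow : (2 : ℝ) ^ n * ((2 : ℝ) ^ (n * k)) = 2 ^ ((k + 1) * n) := by
    rw [← pow_add]
    congr 1
    ring
  have h2 : ((2 : ℝ) ^ ((k + 1) * n)) ≠ 0 := by positivity
  field_simp
  ring
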